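/- Let f be a t-sparse multilinear polynomial over the reals (or any field) in n variables with a non-zero constant term, viewed as a function on {0,1}^n. Let D be a locally α-smooth distribution over {0,1}^n. Then Pr_{x∼D}[f(x) ≠ 0] ≥ (1/(1+α))^{log₂ t}. -/

import Mathlib

open Finset

namespace SparseProof

variable {n : ℕ}

noncomputable def ev (c : Finset (Fin n) → ℝ) (x : Fin n → Bool) : ℝ :=
  ∑ T : Finset (Fin n), c T * ∏ i ∈ T, (if x i then (1 : ℝ) else 0)

noncomputable def cc0 (i : Fin n) (c : Finset (Fin n) → ℝ) : Finset (Fin n) → ℝ :=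
  fun T => if i ∈ T then 0 else c T

noncomputable def cc1 (i : Fin n) (c : Finset (Fin n) → ℝ) : Finset (Fin n) → ℝ :=
  fun T => if i ∈ T then 0 else c T + c (insert i T)

noncomputable def cch (i : Fin n) (c : Finset (Fin n) → ℝ) : Finset (Fin n) → ℝ :=
  fun T => if i ∈ T then 0 else c (insert i T)

lemma ev_update_false (c : Finset (Fin n) → ℝ) (i : Fin n) (x : Fin n → Bool) :
    ev c (Function.update x i false) = ev (cc0 i c) x := by
  unfold ev cc0
  refine Finset.sum_congr rfl fun T _ => ?_
  by_cases hi : i ∈ T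
  · rw [if_pos hi, zero_mul]
    have h0 : (if Function.update x i false i then (1:ℝ) else 0) = 0 := by simp
    rw [Finset.prod_eq_zero hi h0, mul_zero]
  · rw [if_neg hi]
    congr 1
    refine Finset.prod_congr rfl fun j hj => ?_
    have hji : j ≠ i := fun h => hi (by rw [← h]; exact hj)
    rw [Function.update_of_ne hji]

lemma ev_update_true (c : Finset (Fin n) → ℝ) (i : Fin n) (x : Fin n → Bool) :
    ev c (Function.update x i true) = ev (cc1 i c) x := by
  unfold ev cc1
  rw [← Finset.sum_filter_add_sum_filter_not Finset.univ (fun T => i ∈ T)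
      (fun T => c T * ∏ j ∈ T, (if Function.update x i true j then (1:ℝ) else 0)),
     ← Finset.sum_filter_add_sum_filter_not Finset.univ (fun T => i ∈ T)
      (fun T => (if i ∈ T then (0:ℝ) else c T + c (insert i T)) * ∏ j ∈ T, (if x j then (1:ℝ) else 0))]
  have h₁ : ∑ T ∈ Finset.univ.filter (fun T : Finset (Fin n) => i ∈ T),
      (if i ∈ T then (0:ℝ) else c T + c (insert i T)) * ∏ j ∈ T, (if x j then (1:ℝ) else 0) = 0 := by
    refine Finset.sum_eq_zero fun T hT => ?_
    rw [if_pos (Finset.mem_filter.mp hT).2, zero_mul]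
  rw [h₁, zero_add]
  have hB : ∑ T ∈ Finset.univ.filter (fun T : Finset (Fin n) => ¬ i ∈ T),
      c T * ∏ j ∈ T, (if Function.update x i true j then (1:ℝ) else 0)
      = ∑ T ∈ Finset.univ.filter (fun T : Finset (Fin n) => ¬ i ∈ T),
      c T * ∏ j ∈ T, (if x j then (1:ℝ) else 0) := by
    refine Finset.sum_congr rfl fun T hT => ?_
    have hiT : i ∉ T := (Finset.mem_filter.mp hT).2
    congr 1
    refine Finset.prod_congr rfl fun j hj => ?_
    have hji : j ≠ i := fun h => hiT (by rw [← h]; exact hj)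
    rw [Function.update_of_ne hji]
  have hA : ∑ T ∈ Finset.univ.filter (fun T : Finset (Fin n) => i ∈ T),
      c T * ∏ j ∈ T, (if Function.update x i true j then (1:ℝ) else 0)
      = ∑ T ∈ Finset.univ.filter (fun T : Finset (Fin n) => ¬ i ∈ T),
      c (insert i T) * ∏ j ∈ T, (if x j then (1:ℝ) else 0) := by
    apply Finset.sum_nbij' (fun T => T.erase i) (fun T => insert i T)
    · intro T hT
      simp only [Finset.mem_filter, Finset.mem_univ, true_and] at *
      exact Finset.notMem_erase i T
    · intro T hT
      simp only [Finset.mem_filter, Finset.mem_univ, true_and] at *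
      exact Finset.mem_insert_self i T
    · intro T hT
      simp only [Finset.mem_filter, Finset.mem_univ, true_and] at hT
      exact Finset.insert_erase hT
    · intro T hT
      simp only [Finset.mem_filter, Finset.mem_univ, true_and] at hT
      exact Finset.erase_insert hT
    · intro T hT
      simp only [Finset.mem_filter, Finset.mem_univ, true_and] at hT
      rw [Finset.insert_erase hT]
      rw [← Finset.mul_prod_erase (M := ℝ) T (fun j => if Function.update x i true j then (1:ℝ) else 0) (a := i) hT]
      have h1 : (if Function.update x i true i then (1:ℝ) else 0) = 1 := by simp
      rw [h1, one_mul]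
      congr 1
      refine Finset.prod_congr rfl fun j hj => ?_
      have hji : j ≠ i := (Finset.mem_erase.mp hj).1
      rw [Function.update_of_ne hji]
  rw [hA, hB, ← Finset.sum_add_distrib]
  refine Finset.sum_congr rfl fun T hT => ?_
  rw [if_neg (Finset.mem_filter.mp hT).2]
  ring

lemma ev_cch (c : Finset (Fin n) → ℝ) (i : Fin n) (x : Fin n → Bool) :
    ev (cch i c) x = ev (cc1 i c) x - ev (cc0 i c) x := by
  unfold ev cc1 cc0 cch
  rw [← Finset.sum_sub_distrib]
  refine Finset.sum_congr rfl fun T _ => ?_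
  by_cases hi : i ∈ T <;> simp [hi] <;> ring

lemma ev_update_indep (c' : Finset (Fin n) → ℝ) (i : Fin n) (hc : ∀ T, c' T ≠ 0 → i ∉ T)
    (x : Fin n → Bool) (b : Bool) : ev c' (Function.update x i b) = ev c' x := by
  unfold ev
  refine Finset.sum_congr rfl fun T _ => ?_
  by_cases hT : c' T = 0
  · rw [hT, zero_mul, zero_mul]
  · congr 1
    refine Finset.prod_congr rfl fun j hj => ?_
    have hji : j ≠ i := fun h => hc T hT (by rw [← h]; exact hj)
    rw [Function.update_of_ne hji]

lemma ev_of_empty (c : Finset (Fin n) → ℝ) (hc : ∀ T, c T ≠ 0 → T = ∅) (x : Fin n → Bool) :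
    ev c x = c ∅ := by
  unfold ev
  rw [Finset.sum_eq_single ∅]
  · simp
  · intro T _ hT
    by_cases h : c T = 0
    · rw [h, zero_mul]
    · exact absurd (hc T h) hT
  · intro h
    exact absurd (Finset.mem_univ ∅) h

lemma dist_update_le (x x' : Fin n → Bool) (i : Fin n) (b : Bool) :
    hammingDist (Function.update x i b) (Function.update x' i b) ≤ hammingDist x x' := by
  apply Finset.card_le_card
  intro j hj
  simp only [Finset.mem_filter, Finset.mem_univ, true_and] at *
  intro hxx'
  apply hj
  by_cases hji : j = i
  · subst hji; simp
  · rw [Function.update_of_ne hji, Function.update_of_ne hji]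
    exact hxx'

lemma dist_update_self_le (x : Fin n → Bool) (i : Fin n) (b : Bool) :
    hammingDist x (Function.update x i b) ≤ 1 := by
  have h : (Finset.univ.filter fun j => x j ≠ Function.update x i b j) ⊆ {i} := by
    intro j hj
    simp only [Finset.mem_filter, Finset.mem_univ, true_and] at hj
    simp only [Finset.mem_singleton]
    by_contra hji
    exact hj (by rw [Function.update_of_ne hji])
  calc hammingDist x (Function.update x i b)
      = (Finset.univ.filter fun j => x j ≠ Function.update x i b j).card := rfl
    _ ≤ ({i} : Finset (Fin n)).card := Finset.card_le_card h
    _ = 1 := Finset.card_singleton i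

lemma smooth_of_le_one {α : ℝ} (hα : 1 ≤ α) {D : (Fin n → Bool) → ℝ} (hD0 : ∀ x, 0 ≤ D x)
    (hsm : ∀ x x', hammingDist x x' = 1 → D x ≤ α * D x')
    {x x' : Fin n → Bool} (h : hammingDist x x' ≤ 1) : D x ≤ α * D x' := by
  rcases Nat.le_one_iff_eq_zero_or_eq_one.mp h with h0 | h1
  · have hx : x = x' := hammingDist_eq_zero.mp h0
    subst hx
    nlinarith [hD0 x]
  · exact hsm x x' h1

lemma sum_update (F : (Fin n → Bool) → ℝ) (i : Fin n) (b : Bool) :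
    ∑ x : Fin n → Bool, F (Function.update x i b)
      = 2 * ∑ x ∈ Finset.univ.filter (fun x => x i = b), F x := by
  rw [← Finset.sum_filter_add_sum_filter_not Finset.univ (fun x : Fin n → Bool => x i = b)
      (fun x => F (Function.update x i b))]
  have h1 : ∑ x ∈ Finset.univ.filter (fun x : Fin n → Bool => x i = b),
      F (Function.update x i b)
      = ∑ x ∈ Finset.univ.filter (fun x : Fin n → Bool => x i = b), F x := by
    refine Finset.sum_congr rfl fun x hx => ?_
    have hxi : x i = b := (Finset.mem_filter.mp hx).2
    rw [← hxi, Function.update_eq_self]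
  have h2 : ∑ x ∈ Finset.univ.filter (fun x : Fin n → Bool => ¬ x i = b),
      F (Function.update x i b)
      = ∑ x ∈ Finset.univ.filter (fun x : Fin n → Bool => x i = b), F x := by
    apply Finset.sum_nbij' (fun x => Function.update x i b) (fun x => Function.update x i (!b))
    · intro a ha
      simp [Function.update_self]
    · intro a ha
      simp only [Finset.mem_filter, Finset.mem_univ, true_and]
      simp [Function.update_self]
    · intro a ha
      simp only [Finset.mem_filter, Finset.mem_univ, true_and] at ha
      have hai : a i = !b := by
        cases hb : a i <;> cases b <;> simp_all
      rw [Function.update_idem, ← hai, Function.update_eq_self]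
    · intro a ha
      simp only [Finset.mem_filter, Finset.mem_univ, true_and] at ha
      rw [Function.update_idem, ← ha, Function.update_eq_self]
    · intro a ha
      rfl
  rw [h1, h2]
  ring

lemma sum_update_add (D : (Fin n → Bool) → ℝ) (i : Fin n) :
    (∑ x : Fin n → Bool, D (Function.update x i false))
      + (∑ x : Fin n → Bool, D (Function.update x i true)) = 2 * ∑ x : Fin n → Bool, D x := by
  rw [sum_update D i false, sum_update D i true, ← mul_add]
  congr 1
  rw [← Finset.sum_filter_add_sum_filter_not Finset.univ (fun x : Fin n → Bool => x i = false) D]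
  congr 1
  apply Finset.sum_congr _ (fun _ _ => rfl)
  apply Finset.filter_congr
  intro x _
  simp

lemma filter_half (D : (Fin n → Bool) → ℝ) (i : Fin n) (b : Bool)
    (P : (Fin n → Bool) → Prop) [DecidablePred P]
    (hP : ∀ x b', P (Function.update x i b') ↔ P x) :
    ∑ x ∈ Finset.univ.filter (fun x => x i = b ∧ P x), D x
      = (∑ x ∈ Finset.univ.filter P, D (Function.update x i b)) / 2 := by
  have h := sum_update (fun y => if P y then D (Function.update y i b) else 0) i b
  have hL : ∑ x : Fin n → Bool,
      (if P (Function.update x i b) then D (Function.update (Function.update x i b) i b) else 0)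
      = ∑ x ∈ Finset.univ.filter P, D (Function.update x i b) := by
    rw [Finset.sum_filter]
    refine Finset.sum_congr rfl fun x _ => ?_
    rw [Function.update_idem]
    by_cases hp : P x
    · rw [if_pos hp, if_pos ((hP x b).mpr hp)]
    · rw [if_neg hp, if_neg (fun hc => hp ((hP x b).mp hc))]
  have hR : ∑ x ∈ Finset.univ.filter (fun x : Fin n → Bool => x i = b),
      (if P x then D (Function.update x i b) else 0)
      = ∑ x ∈ Finset.univ.filter (fun x => x i = b ∧ P x), D x := by
    rw [← Finset.sum_filter, Finset.filter_filter]
    refine Finset.sum_congr rfl fun x hx => ?_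
    have hxi : x i = b := (Finset.mem_filter.mp hx).2.1
    rw [← hxi, Function.update_eq_self]
  rw [hL, hR] at h
  rw [h]
  ring

lemma one_add_pos {α : ℝ} (hα : 1 ≤ α) : (0:ℝ) < 1 + α := by linarith

lemma Bpos {α : ℝ} (hα : 1 ≤ α) : (0:ℝ) < 1/(1+α) := by
  have := one_add_pos hα; positivity

lemma Ble1 {α : ℝ} (hα : 1 ≤ α) : 1/(1+α) ≤ (1:ℝ) := by
  rw [div_le_one (one_add_pos hα)]; linarith

lemma Bmono {α : ℝ} (hα : 1 ≤ α) {m m' : ℕ} (hm : 1 ≤ m) (hmm : m ≤ m') :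
    (1/(1+α)) ^ Real.logb 2 (m' : ℝ) ≤ (1/(1+α)) ^ Real.logb 2 (m : ℝ) := by
  apply Real.rpow_le_rpow_of_exponent_ge (Bpos hα) (Ble1 hα)
  have hm0 : (0:ℝ) < (m:ℝ) := by exact_mod_cast hm
  have hm'0 : (0:ℝ) < (m':ℝ) := by
    have : 1 ≤ m' := le_trans hm hmm
    exact_mod_cast this
  exact (Real.logb_le_logb one_lt_two hm0 hm'0).mpr (by exact_mod_cast hmm)

lemma Bstep {α : ℝ} (hα : 1 ≤ α) {m s : ℕ} (hm : 1 ≤ m) (h2 : 2*m ≤ s) :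
    (1/(1+α)) ^ Real.logb 2 (s : ℝ) ≤ (1/(1+α)) * (1/(1+α)) ^ Real.logb 2 (m : ℝ) := by
  have hm0 : ((m:ℝ)) ≠ 0 := by
    have : (0:ℝ) < (m:ℝ) := by exact_mod_cast hm
    linarith
  have h1 : (1/(1+α)) ^ Real.logb 2 ((2*m : ℕ) : ℝ)
      = (1/(1+α)) * (1/(1+α)) ^ Real.logb 2 (m:ℝ) := by
    have hlog : Real.logb 2 ((2*m:ℕ):ℝ) = 1 + Real.logb 2 (m:ℝ) := by
      push_cast
      rw [Real.logb_mul two_ne_zero hm0, Real.logb_self_eq_one one_lt_two]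
    rw [hlog, Real.rpow_add (Bpos hα), Real.rpow_one]
  rw [← h1]
  exact Bmono hα (by omega) h2

set_option maxHeartbeats 1000000 in
lemma key {n : ℕ} (α : ℝ) (hα : 1 ≤ α) (s : Finset (Fin n)) :
    ∀ (c : Finset (Fin n) → ℝ), (∀ T, c T ≠ 0 → T ⊆ s) → c ∅ ≠ 0 →
    ∀ (D : (Fin n → Bool) → ℝ), (∀ x, 0 ≤ D x) → (∑ x, D x = 1) →
    (∀ x x', hammingDist x x' = 1 → D x ≤ α * D x') →
    (1 / (1 + α)) ^ (Real.logb 2 (((Finset.univ.filter (fun T => c T ≠ 0)).card : ℕ) : ℝ)) ≤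
      ∑ x ∈ Finset.univ.filter (fun x => ev c x ≠ 0), D x := by
  induction s using Finset.induction_on with
  | empty =>
      intro c hmono hconst D hD0 hD1 hsm
      have hcT : ∀ T, c T ≠ 0 → T = ∅ := fun T h => Finset.subset_empty.mp (hmono T h)
      have hfil : Finset.univ.filter (fun T : Finset (Fin n) => c T ≠ 0) = {∅} := by
        ext T
        simp only [Finset.mem_filter, Finset.mem_univ, true_and, Finset.mem_singleton]
        exact ⟨hcT T, fun h => h ▸ hconst⟩
      have hone : Finset.univ.filter (fun x : Fin n → Bool => ev c x ≠ 0) = Finset.univ := by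
        ext x
        simp only [Finset.mem_filter, Finset.mem_univ, true_and, iff_true]
        rw [ev_of_empty c hcT]
        exact hconst
      rw [hfil, hone, hD1, Finset.card_singleton]
      simp
  | @insert i s' hins IH =>
      intro c hmono hconst D hD0 hD1 hsm
      classical
      have h1α : (0:ℝ) < 1 + α := one_add_pos hα
      -- basic unpacking of the modified coefficient functions
      have hne0 : ∀ T, cc0 i c T ≠ 0 → i ∉ T ∧ c T ≠ 0 := by
        intro T hT
        by_cases hiT : i ∈ T
        · simp [cc0, hiT] at hT
        · simp [cc0, hiT] at hT; exact ⟨hiT, hT⟩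
      have hne1 : ∀ T, cc1 i c T ≠ 0 → i ∉ T ∧ c T + c (insert i T) ≠ 0 := by
        intro T hT
        by_cases hiT : i ∈ T
        · simp [cc1, hiT] at hT
        · simp only [cc1, if_neg hiT] at hT; exact ⟨hiT, hT⟩
      have hneh : ∀ T, cch i c T ≠ 0 → i ∉ T ∧ c (insert i T) ≠ 0 := by
        intro T hT
        by_cases hiT : i ∈ T
        · simp [cch, hiT] at hT
        · simp only [cch, if_neg hiT] at hT; exact ⟨hiT, hT⟩
      -- monotonicity of supports into s'
      have hM0mono : ∀ T, cc0 i c T ≠ 0 → T ⊆ s' := by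
        intro T hT j hj
        obtain ⟨hiT, hcT⟩ := hne0 T hT
        rcases Finset.mem_insert.mp (hmono T hcT hj) with h | h
        · exact absurd (h ▸ hj) hiT
        · exact h
      have hM1mono : ∀ T, cc1 i c T ≠ 0 → T ⊆ s' := by
        intro T hT j hj
        obtain ⟨hiT, hcT⟩ := hne1 T hT
        have hji : j ≠ i := fun h => hiT (h ▸ hj)
        by_cases hT0 : c T ≠ 0
        · rcases Finset.mem_insert.mp (hmono T hT0 hj) with h | h
          · exact absurd h hji
          · exact h
        · push_neg at hT0
          have hT1 : c (insert i T) ≠ 0 := fun h => hcT (by rw [hT0, h, add_zero])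
          rcases Finset.mem_insert.mp (hmono _ hT1 (Finset.mem_insert_of_mem hj)) with h | h
          · exact absurd h hji
          · exact h
      have hMhmono : ∀ T, cch i c T ≠ 0 → T ⊆ s' := by
        intro T hT j hj
        obtain ⟨hiT, hcT⟩ := hneh T hT
        have hji : j ≠ i := fun h => hiT (h ▸ hj)
        rcases Finset.mem_insert.mp (hmono _ hcT (Finset.mem_insert_of_mem hj)) with h | h
        · exact absurd h hji
        · exact h
      -- cardinality facts
      have hMpos : 1 ≤ (Finset.univ.filter (fun T => c T ≠ 0)).card :=
        Finset.card_pos.mpr ⟨∅, by simp [hconst]⟩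
      have hM0pos : 1 ≤ (Finset.univ.filter (fun T => cc0 i c T ≠ 0)).card :=
        Finset.card_pos.mpr ⟨∅, by simp [cc0, hconst]⟩
      have hM0card : (Finset.univ.filter (fun T => cc0 i c T ≠ 0)).card ≤
          (Finset.univ.filter (fun T => c T ≠ 0)).card := by
        apply Finset.card_le_card
        intro T hT
        simp only [Finset.mem_filter, Finset.mem_univ, true_and] at *
        exact (hne0 T hT).2
      have hM1card : (Finset.univ.filter (fun T => cc1 i c T ≠ 0)).card ≤
          (Finset.univ.filter (fun T => c T ≠ 0)).card := by
        apply Finset.card_le_card_of_injOn (fun T => if c T ≠ 0 then T else insert i T)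
        · intro T hT
          simp only [Finset.coe_filter, Set.mem_setOf_eq, Finset.mem_filter, Finset.mem_univ, true_and] at hT ⊢
          obtain ⟨hiT, hsum⟩ := hne1 T hT
          by_cases hcT : c T ≠ 0
          · rw [if_pos hcT]; exact hcT
          · rw [if_neg hcT]
            push_neg at hcT
            exact fun h => hsum (by rw [hcT, h, add_zero])
        · intro T1 h1 T2 h2 heq
          simp only [Finset.coe_filter, Set.mem_setOf_eq, Finset.mem_univ, true_and] at h1 h2
          obtain ⟨hi1, _⟩ := hne1 T1 h1
          obtain ⟨hi2, _⟩ := hne1 T2 h2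
          dsimp only at heq
          by_cases b1 : c T1 ≠ 0 <;> by_cases b2 : c T2 ≠ 0
          · rw [if_pos b1, if_pos b2] at heq; exact heq
          · rw [if_pos b1, if_neg b2] at heq
            exact absurd (by rw [heq]; exact Finset.mem_insert_self i T2) hi1
          · rw [if_neg b1, if_pos b2] at heq
            exact absurd (by rw [← heq]; exact Finset.mem_insert_self i T1) hi2
          · rw [if_neg b1, if_neg b2] at heq
            rw [← Finset.erase_insert hi1, heq, Finset.erase_insert hi2]
      have hMhcard : (Finset.univ.filter (fun T => cch i c T ≠ 0)).card =
          ((Finset.univ.filter (fun T => c T ≠ 0)).filter (fun T => i ∈ T)).card := by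
        apply Finset.card_bij (fun T _ => insert i T)
        · intro T hT
          simp only [Finset.mem_filter, Finset.mem_univ, true_and] at hT ⊢
          obtain ⟨hiT, hcT⟩ := hneh T hT
          exact ⟨hcT, Finset.mem_insert_self i T⟩
        · intro T1 h1 T2 h2 heq
          simp only [Finset.mem_filter, Finset.mem_univ, true_and] at h1 h2
          obtain ⟨hi1, _⟩ := hneh T1 h1
          obtain ⟨hi2, _⟩ := hneh T2 h2
          rw [← Finset.erase_insert hi1, heq, Finset.erase_insert hi2]
        · intro U hU
          simp only [Finset.mem_filter, Finset.mem_univ, true_and] at hU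
          refine ⟨U.erase i, ?_, Finset.insert_erase hU.2⟩
          simp only [Finset.mem_filter, Finset.mem_univ, true_and]
          simp only [cch]
          rw [if_neg (Finset.notMem_erase i U), Finset.insert_erase hU.2]
          exact hU.1
      have hM0eq : Finset.univ.filter (fun T => cc0 i c T ≠ 0) =
          (Finset.univ.filter (fun T => c T ≠ 0)).filter (fun T => ¬ i ∈ T) := by
        rw [Finset.filter_filter]
        ext T
        simp only [Finset.mem_filter, Finset.mem_univ, true_and]
        constructor
        · intro hT
          obtain ⟨hiT, hcT⟩ := hne0 T hT
          exact ⟨hcT, hiT⟩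
        · intro ⟨hcT, hiT⟩
          simp [cc0, hiT, hcT]
      have hpartition : (Finset.univ.filter (fun T => cc0 i c T ≠ 0)).card +
          (Finset.univ.filter (fun T => cch i c T ≠ 0)).card =
          (Finset.univ.filter (fun T => c T ≠ 0)).card := by
        rw [hM0eq, hMhcard, add_comm]
        exact Finset.card_filter_add_card_filter_not (fun T => i ∈ T)
      -- flip facts
      have flip : ∀ (y y' : Fin n → Bool), hammingDist y y' ≤ 1 → D y ≤ α * D y' :=
        fun y y' h => smooth_of_le_one hα hD0 hsm h
      have flip2 : ∀ (x : Fin n → Bool) (b b' : Bool),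
          D (Function.update x i b) ≤ α * D (Function.update x i b') := by
        intro x b b'
        apply flip
        have hu : Function.update x i b' = Function.update (Function.update x i b) i b' :=
          (Function.update_idem b b' x).symm
        rw [hu]
        exact dist_update_self_le (Function.update x i b) i b'
      have hsm_upd : ∀ (b : Bool) (x x' : Fin n → Bool), hammingDist x x' = 1 →
          D (Function.update x i b) ≤ α * D (Function.update x' i b) := by
        intro b x x' h
        exact flip _ _ (le_trans (dist_update_le x x' i b) (le_of_eq h))
      -- the two half-measures
      set E0 := ∑ x : Fin n → Bool, D (Function.update x i false) with hE0def
      set E1 := ∑ x : Fin n → Bool, D (Function.update x i true) with hE1def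
      have hEsum : E0 + E1 = 2 := by
        rw [hE0def, hE1def, sum_update_add D i, hD1, mul_one]
      have hE0nn : 0 ≤ E0 := Finset.sum_nonneg fun x _ => hD0 _
      have hE1nn : 0 ≤ E1 := Finset.sum_nonneg fun x _ => hD0 _
      have hE10 : E1 ≤ α * E0 := by
        rw [hE0def, hE1def, Finset.mul_sum]
        exact Finset.sum_le_sum fun x _ => flip2 x true false
      have hE01 : E0 ≤ α * E1 := by
        rw [hE0def, hE1def, Finset.mul_sum]
        exact Finset.sum_le_sum fun x _ => flip2 x false true
      have hE0low : 2/(1+α) ≤ E0 := by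
        rw [div_le_iff₀ h1α]; nlinarith
      have hE1low : 2/(1+α) ≤ E1 := by
        rw [div_le_iff₀ h1α]; nlinarith
      have hE0pos : 0 < E0 := lt_of_lt_of_le (by positivity) hE0low
      have hE1pos : 0 < E1 := lt_of_lt_of_le (by positivity) hE1low
      -- value agreement on slices
      have hval0 : ∀ x : Fin n → Bool, x i = false → ev c x = ev (cc0 i c) x := by
        intro x hx
        have hupd : Function.update x i false = x := by
          conv_lhs => rw [← hx]
          exact Function.update_eq_self i x
        rw [← ev_update_false c i x, hupd]
      have hval1 : ∀ x : Fin n → Bool, x i = true → ev c x = ev (cc1 i c) x := by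
        intro x hx
        have hupd : Function.update x i true = x := by
          conv_lhs => rw [← hx]
          exact Function.update_eq_self i x
        rw [← ev_update_true c i x, hupd]
      -- independence of slice polynomials from coordinate i
      have hind0 : ∀ (x : Fin n → Bool) (b' : Bool),
          ev (cc0 i c) (Function.update x i b') = ev (cc0 i c) x :=
        fun x b' => ev_update_indep _ i (fun T hT => (hne0 T hT).1) x b'
      have hind1 : ∀ (x : Fin n → Bool) (b' : Bool),
          ev (cc1 i c) (Function.update x i b') = ev (cc1 i c) x :=
        fun x b' => ev_update_indep _ i (fun T hT => (hne1 T hT).1) x b'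
      have hindh : ∀ (x : Fin n → Bool) (b' : Bool),
          ev (cch i c) (Function.update x i b') = ev (cch i c) x :=
        fun x b' => ev_update_indep _ i (fun T hT => (hneh T hT).1) x b'
      -- abbreviations for the slice sums
      set S0 := ∑ x ∈ Finset.univ.filter (fun x => ev (cc0 i c) x ≠ 0),
          D (Function.update x i false) with hS0def
      set S1 := ∑ x ∈ Finset.univ.filter (fun x => ev (cc1 i c) x ≠ 0),
          D (Function.update x i true) with hS1def
      -- bound for the 0-slice from the induction hypothesis
      have hB0 : (1/(1+α)) ^ Real.logb 2
          (((Finset.univ.filter (fun T => cc0 i c T ≠ 0)).card : ℕ) : ℝ) * E0 ≤ S0 := by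
        have hIH := IH (cc0 i c) hM0mono (by simp [cc0, hconst])
          (fun x => D (Function.update x i false) / E0)
          (fun x => div_nonneg (hD0 _) hE0nn)
          (by rw [← Finset.sum_div, ← hE0def]; exact div_self hE0pos.ne')
          (by
            intro x x' h
            rw [← mul_div_assoc]
            exact (div_le_div_iff_of_pos_right hE0pos).mpr (hsm_upd false x x' h))
        rw [← Finset.sum_div, ← hS0def] at hIH
        exact (le_div_iff₀ hE0pos).mp hIH
      -- the 0-slice part of the target sum
      have hpart0 : ∑ x ∈ Finset.univ.filter
            (fun x => x i = false ∧ ev (cc0 i c) x ≠ 0), D x = S0 / 2 := by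
        rw [filter_half D i false (fun x => ev (cc0 i c) x ≠ 0)
          (fun x b' => by rw [hind0 x b'])]
      have hsub0 : Finset.univ.filter (fun x => x i = false ∧ ev (cc0 i c) x ≠ 0) ⊆
          Finset.univ.filter (fun x : Fin n → Bool => ev c x ≠ 0) := by
        intro x hx
        simp only [Finset.mem_filter, Finset.mem_univ, true_and] at hx ⊢
        rw [hval0 x hx.1]
        exact hx.2
      have hBMnn : (0:ℝ) ≤ (1/(1+α)) ^ Real.logb 2
          (((Finset.univ.filter (fun T => c T ≠ 0)).card : ℕ) : ℝ) :=
        Real.rpow_nonneg (Bpos hα).le _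
      by_cases hcase : c ∅ + c {i} ≠ 0
      · -- CASE A : both slices have non-zero constant term
        have hM1pos : 1 ≤ (Finset.univ.filter (fun T => cc1 i c T ≠ 0)).card := by
          refine Finset.card_pos.mpr ⟨∅, ?_⟩
          simp only [Finset.mem_filter, Finset.mem_univ, true_and]
          simp only [cc1]
          rw [if_neg (Finset.notMem_empty i)]
          simpa using hcase
        have hB1 : (1/(1+α)) ^ Real.logb 2
            (((Finset.univ.filter (fun T => cc1 i c T ≠ 0)).card : ℕ) : ℝ) * E1 ≤ S1 := by
          have hIH := IH (cc1 i c) hM1mono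
            (by
              simp only [cc1]
              rw [if_neg (Finset.notMem_empty i)]
              simpa using hcase)
            (fun x => D (Function.update x i true) / E1)
            (fun x => div_nonneg (hD0 _) hE1nn)
            (by rw [← Finset.sum_div, ← hE1def]; exact div_self hE1pos.ne')
            (by
              intro x x' h
              rw [← mul_div_assoc]
              exact (div_le_div_iff_of_pos_right hE1pos).mpr (hsm_upd true x x' h))
          rw [← Finset.sum_div, ← hS1def] at hIH
          exact (le_div_iff₀ hE1pos).mp hIH
        have hpart1 : ∑ x ∈ Finset.univ.filter
              (fun x => x i = true ∧ ev (cc1 i c) x ≠ 0), D x = S1 / 2 := by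
          rw [filter_half D i true (fun x => ev (cc1 i c) x ≠ 0)
            (fun x b' => by rw [hind1 x b'])]
        have hsub1 : Finset.univ.filter (fun x => x i = true ∧ ev (cc1 i c) x ≠ 0) ⊆
            Finset.univ.filter (fun x : Fin n → Bool => ev c x ≠ 0) := by
          intro x hx
          simp only [Finset.mem_filter, Finset.mem_univ, true_and] at hx ⊢
          rw [hval1 x hx.1]
          exact hx.2
        have hdisj : Disjoint
            (Finset.univ.filter (fun x => x i = false ∧ ev (cc0 i c) x ≠ 0))
            (Finset.univ.filter (fun x => x i = true ∧ ev (cc1 i c) x ≠ 0)) := by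
          rw [Finset.disjoint_left]
          intro x hx hx'
          simp only [Finset.mem_filter, Finset.mem_univ, true_and] at hx hx'
          rw [hx.1] at hx'
          exact absurd hx'.1 (by simp)
        have hunion : ∑ x ∈ (Finset.univ.filter (fun x => x i = false ∧ ev (cc0 i c) x ≠ 0)) ∪
              (Finset.univ.filter (fun x => x i = true ∧ ev (cc1 i c) x ≠ 0)), D x ≤
            ∑ x ∈ Finset.univ.filter (fun x : Fin n → Bool => ev c x ≠ 0), D x :=
          Finset.sum_le_sum_of_subset_of_nonneg (Finset.union_subset hsub0 hsub1)
            (fun x _ _ => hD0 x)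
        rw [Finset.sum_union hdisj, hpart0, hpart1] at hunion
        -- combine
        have hBM0 : (1/(1+α)) ^ Real.logb 2
            (((Finset.univ.filter (fun T => c T ≠ 0)).card : ℕ) : ℝ) ≤
            (1/(1+α)) ^ Real.logb 2
            (((Finset.univ.filter (fun T => cc0 i c T ≠ 0)).card : ℕ) : ℝ) :=
          Bmono hα hM0pos hM0card
        have hBM1 : (1/(1+α)) ^ Real.logb 2
            (((Finset.univ.filter (fun T => c T ≠ 0)).card : ℕ) : ℝ) ≤
            (1/(1+α)) ^ Real.logb 2
            (((Finset.univ.filter (fun T => cc1 i c T ≠ 0)).card : ℕ) : ℝ) :=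
          Bmono hα hM1pos hM1card
        have h0 : (1/(1+α)) ^ Real.logb 2
            (((Finset.univ.filter (fun T => c T ≠ 0)).card : ℕ) : ℝ) * E0 ≤ S0 :=
          le_trans (mul_le_mul_of_nonneg_right hBM0 hE0nn) hB0
        have h1 : (1/(1+α)) ^ Real.logb 2
            (((Finset.univ.filter (fun T => c T ≠ 0)).card : ℕ) : ℝ) * E1 ≤ S1 :=
          le_trans (mul_le_mul_of_nonneg_right hBM1 hE1nn) hB1
        have hexp : (1/(1+α)) ^ Real.logb 2
            (((Finset.univ.filter (fun T => c T ≠ 0)).card : ℕ) : ℝ) * E0 +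
            (1/(1+α)) ^ Real.logb 2
            (((Finset.univ.filter (fun T => c T ≠ 0)).card : ℕ) : ℝ) * E1 =
            2 * (1/(1+α)) ^ Real.logb 2
            (((Finset.univ.filter (fun T => c T ≠ 0)).card : ℕ) : ℝ) := by
          rw [← mul_add, hEsum]; ring
        linarith
      · -- CASE B
        push_neg at hcase
        have hci : c {i} ≠ 0 := by
          intro h
          apply hconst
          have h' : c ∅ = -c {i} := by linarith
          rw [h', h, neg_zero]
        have hchconst : cch i c ∅ ≠ 0 := by
          simp only [cch]
          rw [if_neg (Finset.notMem_empty i)]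
          simpa using hci
        have hMhpos : 1 ≤ (Finset.univ.filter (fun T => cch i c T ≠ 0)).card := by
          refine Finset.card_pos.mpr ⟨∅, ?_⟩
          simp only [Finset.mem_filter, Finset.mem_univ, true_and]
          exact hchconst
        have hB0nn : (0:ℝ) ≤ (1/(1+α)) ^ Real.logb 2
            (((Finset.univ.filter (fun T => cc0 i c T ≠ 0)).card : ℕ) : ℝ) :=
          Real.rpow_nonneg (Bpos hα).le _
        by_cases hab : (Finset.univ.filter (fun T => cc0 i c T ≠ 0)).card ≤
            (Finset.univ.filter (fun T => cch i c T ≠ 0)).card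
        · -- subcase B1 : recurse on the 0-slice alone
          have h2a : 2 * (Finset.univ.filter (fun T => cc0 i c T ≠ 0)).card ≤
              (Finset.univ.filter (fun T => c T ≠ 0)).card := by omega
          have hstep := Bstep hα hM0pos h2a
          have hsum0 : ∑ x ∈ Finset.univ.filter
                (fun x => x i = false ∧ ev (cc0 i c) x ≠ 0), D x ≤
              ∑ x ∈ Finset.univ.filter (fun x : Fin n → Bool => ev c x ≠ 0), D x :=
            Finset.sum_le_sum_of_subset_of_nonneg hsub0 (fun x _ _ => hD0 x)
          rw [hpart0] at hsum0
          have hmul : (1/(1+α)) ^ Real.logb 2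
              (((Finset.univ.filter (fun T => cc0 i c T ≠ 0)).card : ℕ) : ℝ) * (2/(1+α)) ≤
              (1/(1+α)) ^ Real.logb 2
              (((Finset.univ.filter (fun T => cc0 i c T ≠ 0)).card : ℕ) : ℝ) * E0 :=
            mul_le_mul_of_nonneg_left hE0low hB0nn
          have hid : (1/(1+α)) * (1/(1+α)) ^ Real.logb 2
              (((Finset.univ.filter (fun T => cc0 i c T ≠ 0)).card : ℕ) : ℝ)
              = (1/(1+α)) ^ Real.logb 2
              (((Finset.univ.filter (fun T => cc0 i c T ≠ 0)).card : ℕ) : ℝ) * (2/(1+α)) / 2 := by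
            ring
          linarith
        · -- subcase B2 : recurse on the derivative polynomial cch
          have h2m : 2 * (Finset.univ.filter (fun T => cch i c T ≠ 0)).card ≤
              (Finset.univ.filter (fun T => c T ≠ 0)).card := by omega
          have hstep := Bstep hα hMhpos h2m
          have hIHh := IH (cch i c) hMhmono hchconst
            (fun x => (D (Function.update x i false) + D (Function.update x i true)) / 2)
            (fun x => div_nonneg (add_nonneg (hD0 _) (hD0 _)) (by norm_num))
            (by
              rw [← Finset.sum_div, Finset.sum_add_distrib, ← hE0def, ← hE1def, hEsum]
              norm_num)
            (by
              intro x x' h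
              have h0 := hsm_upd false x x' h
              have h1 := hsm_upd true x x' h
              nlinarith)
          have hpart0' : ∑ x ∈ Finset.univ.filter
                (fun x => x i = false ∧ (ev (cch i c) x ≠ 0 ∧ ev (cc0 i c) x ≠ 0)), D x
              = (∑ x ∈ Finset.univ.filter
                  (fun x => ev (cch i c) x ≠ 0 ∧ ev (cc0 i c) x ≠ 0),
                  D (Function.update x i false)) / 2 :=
            filter_half D i false _
              (fun x b' => by rw [hindh x b', hind0 x b'])
          have hpart1' : ∑ x ∈ Finset.univ.filter
                (fun x => x i = true ∧ (ev (cch i c) x ≠ 0 ∧ ev (cc1 i c) x ≠ 0)), D x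
              = (∑ x ∈ Finset.univ.filter
                  (fun x => ev (cch i c) x ≠ 0 ∧ ev (cc1 i c) x ≠ 0),
                  D (Function.update x i true)) / 2 :=
            filter_half D i true _
              (fun x b' => by rw [hindh x b', hind1 x b'])
          have hsub0' : Finset.univ.filter
                (fun x => x i = false ∧ (ev (cch i c) x ≠ 0 ∧ ev (cc0 i c) x ≠ 0)) ⊆
              Finset.univ.filter (fun x : Fin n → Bool => ev c x ≠ 0) := by
            intro x hx
            simp only [Finset.mem_filter, Finset.mem_univ, true_and] at hx ⊢
            rw [hval0 x hx.1]
            exact hx.2.2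
          have hsub1' : Finset.univ.filter
                (fun x => x i = true ∧ (ev (cch i c) x ≠ 0 ∧ ev (cc1 i c) x ≠ 0)) ⊆
              Finset.univ.filter (fun x : Fin n → Bool => ev c x ≠ 0) := by
            intro x hx
            simp only [Finset.mem_filter, Finset.mem_univ, true_and] at hx ⊢
            rw [hval1 x hx.1]
            exact hx.2.2
          have hdisj' : Disjoint
              (Finset.univ.filter
                (fun x => x i = false ∧ (ev (cch i c) x ≠ 0 ∧ ev (cc0 i c) x ≠ 0)))
              (Finset.univ.filter
                (fun x => x i = true ∧ (ev (cch i c) x ≠ 0 ∧ ev (cc1 i c) x ≠ 0))) := by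
            rw [Finset.disjoint_left]
            intro x hx hx'
            simp only [Finset.mem_filter, Finset.mem_univ, true_and] at hx hx'
            rw [hx.1] at hx'
            exact absurd hx'.1 (by simp)
          have hunion' : ∑ x ∈ (Finset.univ.filter
                (fun x => x i = false ∧ (ev (cch i c) x ≠ 0 ∧ ev (cc0 i c) x ≠ 0))) ∪
              (Finset.univ.filter
                (fun x => x i = true ∧ (ev (cch i c) x ≠ 0 ∧ ev (cc1 i c) x ≠ 0))), D x ≤
              ∑ x ∈ Finset.univ.filter (fun x : Fin n → Bool => ev c x ≠ 0), D x :=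
            Finset.sum_le_sum_of_subset_of_nonneg (Finset.union_subset hsub0' hsub1')
              (fun x _ _ => hD0 x)
          rw [Finset.sum_union hdisj', hpart0', hpart1'] at hunion'
          -- pointwise comparison
          have hpw : ∀ x : Fin n → Bool,
              (if ev (cch i c) x ≠ 0 then
                (1/(1+α)) * ((D (Function.update x i false) + D (Function.update x i true)) / 2)
                else 0)
              ≤ (if ev (cch i c) x ≠ 0 ∧ ev (cc0 i c) x ≠ 0 then
                    D (Function.update x i false) else 0) / 2
                + (if ev (cch i c) x ≠ 0 ∧ ev (cc1 i c) x ≠ 0 then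
                    D (Function.update x i true) else 0) / 2 := by
            intro x
            have hnn0 : (0:ℝ) ≤ (if ev (cch i c) x ≠ 0 ∧ ev (cc0 i c) x ≠ 0 then
                D (Function.update x i false) else 0) := by
              split
              · exact hD0 _
              · exact le_refl 0
            have hnn1 : (0:ℝ) ≤ (if ev (cch i c) x ≠ 0 ∧ ev (cc1 i c) x ≠ 0 then
                D (Function.update x i true) else 0) := by
              split
              · exact hD0 _
              · exact le_refl 0
            by_cases hh : ev (cch i c) x ≠ 0
            · rw [if_pos hh]
              by_cases h0 : ev (cc0 i c) x ≠ 0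
              · rw [if_pos ⟨hh, h0⟩]
                have hu : (1/(1+α)) * (1+α) = 1 := by
                  rw [one_div]
                  exact inv_mul_cancel₀ h1α.ne'
                have hkey : (1/(1+α)) *
                    ((D (Function.update x i false) + D (Function.update x i true)) / 2)
                    ≤ D (Function.update x i false) / 2 := by
                  calc (1/(1+α)) *
                      ((D (Function.update x i false) + D (Function.update x i true)) / 2)
                      ≤ (1/(1+α)) * ((D (Function.update x i false)
                          + α * D (Function.update x i false)) / 2) := by
                        apply mul_le_mul_of_nonneg_left _ (Bpos hα).le
                        have := flip2 x true false
                        linarith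
                    _ = D (Function.update x i false) / 2 * ((1/(1+α)) * (1+α)) := by ring
                    _ = D (Function.update x i false) / 2 := by rw [hu, mul_one]
                linarith
              · push_neg at h0
                have h1 : ev (cc1 i c) x ≠ 0 := by
                  intro h'
                  apply hh
                  rw [ev_cch c i x, h', h0, sub_zero]
                rw [if_neg (show ¬(ev (cch i c) x ≠ 0 ∧ ev (cc0 i c) x ≠ 0) from
                  fun hq => hq.2 h0), if_pos ⟨hh, h1⟩]
                have hu : (1/(1+α)) * (1+α) = 1 := by
                  rw [one_div]
                  exact inv_mul_cancel₀ h1α.ne'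
                have hkey : (1/(1+α)) *
                    ((D (Function.update x i false) + D (Function.update x i true)) / 2)
                    ≤ D (Function.update x i true) / 2 := by
                  calc (1/(1+α)) *
                      ((D (Function.update x i false) + D (Function.update x i true)) / 2)
                      ≤ (1/(1+α)) * ((α * D (Function.update x i true)
                          + D (Function.update x i true)) / 2) := by
                        apply mul_le_mul_of_nonneg_left _ (Bpos hα).le
                        have := flip2 x false true
                        linarith
                    _ = D (Function.update x i true) / 2 * ((1/(1+α)) * (1+α)) := by ring
                    _ = D (Function.update x i true) / 2 := by rw [hu, mul_one]
                linarith
            · rw [if_neg hh]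
              exact add_nonneg (div_nonneg hnn0 (by norm_num))
                (div_nonneg hnn1 (by norm_num))
          have hpoint : (1/(1+α)) * ∑ x ∈ Finset.univ.filter
                (fun x => ev (cch i c) x ≠ 0),
                ((D (Function.update x i false) + D (Function.update x i true)) / 2) ≤
              (∑ x ∈ Finset.univ.filter
                  (fun x => ev (cch i c) x ≠ 0 ∧ ev (cc0 i c) x ≠ 0),
                  D (Function.update x i false)) / 2
              + (∑ x ∈ Finset.univ.filter
                  (fun x => ev (cch i c) x ≠ 0 ∧ ev (cc1 i c) x ≠ 0),
                  D (Function.update x i true)) / 2 := by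
            rw [Finset.mul_sum, Finset.sum_filter, Finset.sum_filter
                (fun x => ev (cch i c) x ≠ 0 ∧ ev (cc0 i c) x ≠ 0),
              Finset.sum_filter (fun x => ev (cch i c) x ≠ 0 ∧ ev (cc1 i c) x ≠ 0),
              Finset.sum_div, Finset.sum_div, ← Finset.sum_add_distrib]
            exact Finset.sum_le_sum (fun x _ => hpw x)
          have hchain : (1/(1+α)) * ((1/(1+α)) ^ Real.logb 2
              (((Finset.univ.filter (fun T => cch i c T ≠ 0)).card : ℕ) : ℝ)) ≤
              (1/(1+α)) * ∑ x ∈ Finset.univ.filter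
                (fun x => ev (cch i c) x ≠ 0),
                ((D (Function.update x i false) + D (Function.update x i true)) / 2) :=
            mul_le_mul_of_nonneg_left hIHh (Bpos hα).le
          linarith only [hstep, hchain, hpoint, hunion']
end SparseProof

open Finset

/-- A t-sparse multilinear polynomial over {0,1}^n with non-zero
constant term is non-zero with probability at least (1/(1+α))^{log₂ t} under
any locally α-smooth distribution. -/
theorem sparse_poly_nonzero_prob (n t : ℕ) (ht : 2 ≤ t)
    (c : Finset (Fin n) → ℝ)
    (hsparse : (univ.filter (fun T : Finset (Fin n) => c T ≠ 0)).card ≤ t)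
    (hconst : c ∅ ≠ 0)
    (α : ℝ) (hα : 1 ≤ α)
    (D : (Fin n → Bool) → ℝ) (hD0 : ∀ x, 0 ≤ D x) (hD1 : ∑ x, D x = 1)
    (hsmooth : ∀ x x' : Fin n → Bool, hammingDist x x' = 1 → D x ≤ α * D x') :
    (1 / (1 + α)) ^ (Real.logb 2 t) ≤
      ∑ x ∈ univ.filter (fun x : Fin n → Bool =>
        (∑ T : Finset (Fin n), c T * ∏ i ∈ T, (if x i then (1 : ℝ) else 0)) ≠ 0),
        D x := by
  have hkey := SparseProof.key α hα Finset.univ c (fun T _ => Finset.subset_univ T)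
    hconst D hD0 hD1 hsmooth
  have hcard1 : 1 ≤ (univ.filter (fun T : Finset (Fin n) => c T ≠ 0)).card :=
    Finset.card_pos.mpr ⟨∅, by simp [hconst]⟩
  have hmono := SparseProof.Bmono hα hcard1 hsparse
  exact le_trans hmono hkey
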